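/- Suppose f belongs to the class of structured problems, and let {(z_{k−1}, x_k, x̂_k)}_{k≥0} be generated by the fast gradient method: x_0 := z_{−1} := argmin_{x∈Q} d(x), x̂_0 := z_0 := argmin_{x∈Q} ψ_0(x), and for k ≥ 0: x_{k+1} := (Σ_{i=0}^k λ_i z_i + λ_{k+1} z_k)/S_{k+1}, z_{k+1} := argmin_{x∈Q} ψ_{k+1}(x), x̂_{k+1} := (1/S_{k+1}) Σ_{i=0}^{k+1} λ_i z_i, where {ψ_k} is any sequence of auxiliary functions satisfying Property 1. If σ β_{k−1} S_k/λ_k² ≥ L(x_k) for all k ≥ 0, then for all k ≥ 0: f(x̂_k) − f(x*) ≤ (β_k l_d(z_k; x*) + Σ_{i=0}^k S_i δ(x_i))/S_k. -/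

import Mathlib

set_option maxHeartbeats 1000000 in
/-- Corollary 5.1 (b): convergence estimate of the fast gradient method for structured
problems.  (Indices shifted: `z k`, `β k` stand for the paper's `z_{k-1}`, `β_{k-1}`.) -/
theorem fast_gradient_method_estimate
    {E : Type*} [NormedAddCommGroup E] [NormedSpace ℝ E] [FiniteDimensional ℝ E]
    (Q : Set E) (hQne : Q.Nonempty) (hQcl : IsClosed Q) (hQcv : Convex ℝ Q)
    (f : E → ℝ) (hf_cv : ConvexOn ℝ Q f) (hf_lsc : LowerSemicontinuousOn f Q)
    (σ : ℝ) (hσ : 0 < σ)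
    (d : E → ℝ) (d' : E → E →L[ℝ] ℝ)
    (hd_sc : StrongConvexOn Q σ d)
    (hd_diff : ∀ y ∈ Q, HasFDerivWithinAt d (d' y) Q y)
    (x₀ : E) (hx₀Q : x₀ ∈ Q) (hdx₀ : d x₀ = 0) (hd_nonneg : ∀ u ∈ Q, 0 ≤ d u)
    (hBreg : ∀ w ∈ Q, ∀ u ∈ Q, σ / 2 * ‖u - w‖ ^ 2 ≤ d u - d w - d' w (u - w))
    (lam : ℕ → ℝ) (hlam : ∀ k, 0 < lam k)
    (β : ℕ → ℝ) (hβ0 : 0 < β 0) (hβmono : ∀ k, β k ≤ β (k + 1))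
    (x : ℕ → E) (hxQ : ∀ k, x k ∈ Q)
    (ψ : ℕ → E → ℝ) (z : ℕ → E)
    (hzQ : ∀ n, z n ∈ Q) (hzmin : ∀ n, ∀ u ∈ Q, ψ n (z n) ≤ ψ n u)
    (lf : E → E → ℝ) (L : E → ℝ) (δ : E → ℝ)
    (hL : ∀ y ∈ Q, 0 < L y) (hδ : ∀ y ∈ Q, 0 ≤ δ y)
    (hlf_cv : ∀ y ∈ Q, ConvexOn ℝ Q (lf y))
    (hlf_lsc : ∀ y ∈ Q, LowerSemicontinuousOn (lf y) Q)
    (hlf_lb : ∀ y ∈ Q, ∀ u ∈ Q, lf y u ≤ f u)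
    (hlf_ub : ∀ y ∈ Q, ∀ u ∈ Q, f u ≤ lf y u + L y / 2 * ‖u - y‖ ^ 2 + δ y)
    (hP1a : ψ 0 (z 0) = 0) (hP1b : z 0 = x₀)
    (hP2 : ∀ n : ℕ, ∀ u ∈ Q,
      ψ n (z n) + lam n * lf (x n) u + β (n + 1) * d u
        - β n * (d (z n) + d' (z n) (u - z n)) ≤ ψ (n + 1) u)
    (hP3 : ∀ k : ℕ, ∀ u ∈ Q,
      ψ (k + 1) (z (k + 1)) ≤ (∑ i ∈ Finset.range (k + 1), lam i * lf (x i) u)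
        + β (k + 1) * (d (z (k + 1)) + d' (z (k + 1)) (u - z (k + 1))))
    (xs : E) (hxsQ : xs ∈ Q) (hxs_opt : ∀ u ∈ Q, f xs ≤ f u)
    (xhat : ℕ → E)
    (hmx0 : x 0 = z 0)
    (hmx : ∀ k : ℕ, x (k + 1) = (∑ i ∈ Finset.range (k + 2), lam i)⁻¹ •
        ((∑ i ∈ Finset.range (k + 1), lam i • z (i + 1)) + lam (k + 1) • z (k + 1)))
    (hmxhat : ∀ k, xhat k = (∑ i ∈ Finset.range (k + 1), lam i)⁻¹ • ∑ i ∈ Finset.range (k + 1), lam i • z (i + 1))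
    (hcond : ∀ k, L (x k) ≤ σ * β k * (∑ i ∈ Finset.range (k + 1), lam i) / (lam k) ^ 2) :
    ∀ k : ℕ,
      f (xhat k) - f xs ≤
        (β (k + 1) * (d (z (k + 1)) + d' (z (k + 1)) (xs - z (k + 1)))
          + ∑ i ∈ Finset.range (k + 1), (∑ j ∈ Finset.range (i + 1), lam j) * δ (x i))
        / (∑ i ∈ Finset.range (k + 1), lam i) := by

  have hSpos : ∀ k : ℕ, 0 < ∑ i ∈ Finset.range (k + 1), lam i := fun k =>
    Finset.sum_pos (fun i _ => hlam i) Finset.nonempty_range_add_one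
  have hβge : ∀ n, β 0 ≤ β n := by
    intro n
    induction n with
    | zero => exact le_rfl
    | succ n ih => exact ih.trans (hβmono n)
  have hβpos : ∀ n, 0 < β n := fun n => lt_of_lt_of_le hβ0 (hβge n)
  have hxhat0 : xhat 0 = z 1 := by
    have h := hmxhat 0
    simp only [zero_add, Finset.range_one, Finset.sum_singleton] at h
    rw [h, smul_smul, inv_mul_cancel₀ (hlam 0).ne', one_smul]
  have hTS : ∀ k : ℕ, (∑ i ∈ Finset.range (k + 1), lam i) • xhat k
      = ∑ i ∈ Finset.range (k + 1), lam i • z (i + 1) := by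
    intro k
    rw [hmxhat k, smul_smul, mul_inv_cancel₀ (hSpos k).ne', one_smul]
  have hrec : ∀ k : ℕ, xhat (k + 1) = (∑ i ∈ Finset.range (k + 2), lam i)⁻¹ •
      ((∑ i ∈ Finset.range (k + 1), lam i) • xhat k + lam (k + 1) • z (k + 2)) := by
    intro k
    rw [hmxhat (k + 1), hTS k, Finset.sum_range_succ (fun i => lam i • z (i + 1))]
  have hxrec : ∀ k : ℕ, x (k + 1) = (∑ i ∈ Finset.range (k + 2), lam i)⁻¹ •
      ((∑ i ∈ Finset.range (k + 1), lam i) • xhat k + lam (k + 1) • z (k + 1)) := by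
    intro k
    rw [hmx k, hTS k]
  have hdiff : ∀ k : ℕ, xhat (k + 1) - x (k + 1)
      = (lam (k + 1) / (∑ i ∈ Finset.range (k + 2), lam i)) • (z (k + 2) - z (k + 1)) := by
    intro k
    rw [hrec k, hxrec k, ← smul_sub, add_sub_add_left_eq_sub, ← smul_sub, smul_smul,
      div_eq_inv_mul]
  have hcomb : ∀ k : ℕ, xhat (k + 1) =
      ((∑ i ∈ Finset.range (k + 1), lam i) / (∑ i ∈ Finset.range (k + 2), lam i)) • xhat k
      + (lam (k + 1) / (∑ i ∈ Finset.range (k + 2), lam i)) • z (k + 2) := by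
    intro k
    rw [hrec k, smul_add, smul_smul, smul_smul, div_eq_inv_mul, div_eq_inv_mul]
  have hxhatQ : ∀ k : ℕ, xhat k ∈ Q := by
    intro k
    induction k with
    | zero => rw [hxhat0]; exact hzQ 1
    | succ k ih =>
      rw [hcomb k]
      refine hQcv ih (hzQ (k + 2)) ?_ ?_ ?_
      · exact div_nonneg (hSpos k).le (hSpos (k + 1)).le
      · exact div_nonneg (hlam (k + 1)).le (hSpos (k + 1)).le
      · rw [← add_div, ← Finset.sum_range_succ, div_self (hSpos (k + 1)).ne']
  -- main induction
  have key : ∀ k : ℕ, (∑ i ∈ Finset.range (k + 1), lam i) * f (xhat k)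
      ≤ ψ (k + 1) (z (k + 1)) + ∑ i ∈ Finset.range (k + 1),
          (∑ j ∈ Finset.range (i + 1), lam j) * δ (x i) := by
    intro k
    induction k with
    | zero =>
      simp only [zero_add, Finset.range_one, Finset.sum_singleton]
      have hx0 : x 0 = x₀ := by rw [hmx0, hP1b]
      have hP := hP2 0 (z 1) (hzQ 1)
      rw [hP1a, hP1b, hdx₀, hx0] at hP
      have hub := hlf_ub x₀ hx₀Q (z 1) (hzQ 1)
      have hbr := hBreg x₀ hx₀Q (z 1) (hzQ 1)
      rw [hdx₀] at hbr
      have hc := hcond 0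
      simp only [zero_add, Finset.range_one, Finset.sum_singleton] at hc
      rw [hx0] at hc
      rw [le_div_iff₀ (pow_pos (hlam 0) 2)] at hc
      have hLlam : lam 0 * L x₀ ≤ σ * β 0 := by nlinarith [hlam 0]
      have h2 : lam 0 * f (z 1) ≤ lam 0 * lf x₀ (z 1)
          + σ * β 0 / 2 * ‖z 1 - x₀‖ ^ 2 + lam 0 * δ x₀ := by
        nlinarith [sq_nonneg ‖z 1 - x₀‖, mul_le_mul_of_nonneg_left hub (hlam 0).le,
          mul_le_mul_of_nonneg_right hLlam (sq_nonneg ‖z 1 - x₀‖)]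
      have h3 : σ * β 0 / 2 * ‖z 1 - x₀‖ ^ 2
          ≤ β 0 * d (z 1) - β 0 * d' x₀ (z 1 - x₀) := by
        nlinarith [mul_le_mul_of_nonneg_left hbr hβ0.le]
      have h4 : β 0 * d (z 1) ≤ β 1 * d (z 1) :=
        mul_le_mul_of_nonneg_right (hβmono 0) (hd_nonneg (z 1) (hzQ 1))
      rw [hxhat0, hx0]
      linarith [hP, h2, h3, h4]
    | succ k ih =>
      set Sk := ∑ i ∈ Finset.range (k + 1), lam i with hSk
      set S' := ∑ i ∈ Finset.range (k + 2), lam i with hS'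
      have hS'pos : 0 < S' := hSpos (k + 1)
      have hSkpos : 0 < Sk := hSpos k
      set N := ‖z (k + 2) - z (k + 1)‖ with hN
      set r := ‖xhat (k + 1) - x (k + 1)‖ with hr
      have hP := hP2 (k + 1) (z (k + 2)) (hzQ (k + 2))
      have hub := hlf_ub (x (k + 1)) (hxQ (k + 1)) (xhat (k + 1)) (hxhatQ (k + 1))
      have hlb := hlf_lb (x (k + 1)) (hxQ (k + 1)) (xhat k) (hxhatQ k)
      have hbr := hBreg (z (k + 1)) (hzQ (k + 1)) (z (k + 2)) (hzQ (k + 2))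
      -- norm relation
      have hrS : r * S' = lam (k + 1) * N := by
        rw [hr, hdiff k, norm_smul, Real.norm_eq_abs,
          abs_of_pos (div_pos (hlam (k + 1)) hS'pos), ← hN]
        field_simp
      have hsq : r ^ 2 * S' ^ 2 = lam (k + 1) ^ 2 * N ^ 2 := by
        rw [← mul_pow, hrS, mul_pow]
      -- condition
      have hc := hcond (k + 1)
      rw [le_div_iff₀ (pow_pos (hlam (k + 1)) 2)] at hc
      have hkey : S' * L (x (k + 1)) * r ^ 2 ≤ σ * β (k + 1) * N ^ 2 := by
        refine (mul_le_mul_iff_right₀ hS'pos).mp ?_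
        calc S' * (S' * L (x (k + 1)) * r ^ 2)
            = L (x (k + 1)) * (r ^ 2 * S' ^ 2) := by ring
          _ = L (x (k + 1)) * lam (k + 1) ^ 2 * N ^ 2 := by rw [hsq]; ring
          _ ≤ σ * β (k + 1) * S' * N ^ 2 := by
              exact mul_le_mul_of_nonneg_right (by linarith [hc]) (sq_nonneg N)
          _ = S' * (σ * β (k + 1) * N ^ 2) := by ring
      -- convexity of lf (x (k+1))
      have hconv := (hlf_cv (x (k + 1)) (hxQ (k + 1))).2 (hxhatQ k) (hzQ (k + 2))
        (div_nonneg hSkpos.le hS'pos.le) (div_nonneg (hlam (k + 1)).le hS'pos.le)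
        (by rw [← add_div, hSk, ← Finset.sum_range_succ, ← hS',
          div_self hS'pos.ne'])
      rw [← hcomb k] at hconv
      have hconvS : S' * lf (x (k + 1)) (xhat (k + 1))
          ≤ Sk * lf (x (k + 1)) (xhat k) + lam (k + 1) * lf (x (k + 1)) (z (k + 2)) := by
        have h := mul_le_mul_of_nonneg_left hconv hS'pos.le
        calc S' * lf (x (k + 1)) (xhat (k + 1))
            ≤ S' * (Sk / S' * lf (x (k + 1)) (xhat k)
              + lam (k + 1) / S' * lf (x (k + 1)) (z (k + 2))) := h
          _ = Sk * lf (x (k + 1)) (xhat k) + lam (k + 1) * lf (x (k + 1)) (z (k + 2)) := by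
              field_simp
      have h1 : S' * f (xhat (k + 1)) ≤ S' * lf (x (k + 1)) (xhat (k + 1))
          + σ * β (k + 1) / 2 * N ^ 2 + S' * δ (x (k + 1)) := by
        nlinarith [mul_le_mul_of_nonneg_left hub hS'pos.le, hkey]
      have h2 : σ * β (k + 1) / 2 * N ^ 2 ≤ β (k + 1) * d (z (k + 2))
          - β (k + 1) * d (z (k + 1)) - β (k + 1) * d' (z (k + 1)) (z (k + 2) - z (k + 1)) := by
        nlinarith [mul_le_mul_of_nonneg_left hbr (hβpos (k + 1)).le]
      have h3 : Sk * lf (x (k + 1)) (xhat k) ≤ Sk * f (xhat k) :=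
        mul_le_mul_of_nonneg_left hlb hSkpos.le
      have h4 : β (k + 1) * d (z (k + 2)) ≤ β (k + 2) * d (z (k + 2)) :=
        mul_le_mul_of_nonneg_right (hβmono (k + 1)) (hd_nonneg (z (k + 2)) (hzQ (k + 2)))
      rw [Finset.sum_range_succ (fun i => (∑ j ∈ Finset.range (i + 1), lam j) * δ (x i))]
      have hgoal : S' * f (xhat (k + 1)) ≤ ψ (k + 2) (z (k + 2))
          + ((∑ i ∈ Finset.range (k + 1),
              (∑ j ∈ Finset.range (i + 1), lam j) * δ (x i)) + S' * δ (x (k + 1))) := by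
        linarith [hP, h1, h2, h3, h4, hconvS, ih]
      exact hgoal
  -- conclusion
  intro k
  have hP3' := hP3 k xs hxsQ
  have hsum : ∑ i ∈ Finset.range (k + 1), lam i * lf (x i) xs
      ≤ (∑ i ∈ Finset.range (k + 1), lam i) * f xs := by
    rw [Finset.sum_mul]
    exact Finset.sum_le_sum fun i _ =>
      mul_le_mul_of_nonneg_left (hlf_lb (x i) (hxQ i) xs hxsQ) (hlam i).le
  rw [le_div_iff₀ (hSpos k)]
  nlinarith [key k, hP3', hsum]
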